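/- Strict monotonicity of the Bayes rule: if G is not a Dirac point mass (i.e., G is not concentrated at a single point), then the posterior mean δ_G is strictly increasing on ℝ; if G is a point mass at θ₀ then δ_G is constantly equal to θ₀. -/

import Mathlib

open MeasureTheory Set

/-- The standard normal density `φ(z) = (2π)^{-1/2} e^{-z²/2}`. -/
noncomputable def stdNormalPDF (z : ℝ) : ℝ := (Real.sqrt (2 * Real.pi))⁻¹ * Real.exp (-z ^ 2 / 2)

/-- The posterior mean `δ_G(y)`. -/
noncomputable def postMean (σ : ℝ) (G : Measure ℝ) (y : ℝ) : ℝ :=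
  (∫ θ, θ * stdNormalPDF ((y - θ) / σ) ∂G) / ∫ θ, stdNormalPDF ((y - θ) / σ) ∂G

lemma stdNormalPDF_pos (z : ℝ) : 0 < stdNormalPDF z := by
  unfold stdNormalPDF
  positivity

lemma stdNormalPDF_le (z : ℝ) : stdNormalPDF z ≤ (Real.sqrt (2 * Real.pi))⁻¹ := by
  unfold stdNormalPDF
  have h1 : Real.exp (-z ^ 2 / 2) ≤ 1 := Real.exp_le_one_iff.2 (by nlinarith [sq_nonneg z])
  have hC : (0:ℝ) ≤ (Real.sqrt (2 * Real.pi))⁻¹ := by positivity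
  calc (Real.sqrt (2 * Real.pi))⁻¹ * Real.exp (-z ^ 2 / 2) ≤ (Real.sqrt (2 * Real.pi))⁻¹ * 1 :=
        mul_le_mul_of_nonneg_left h1 hC
    _ = (Real.sqrt (2 * Real.pi))⁻¹ := mul_one _

lemma stdNormalPDF_cont : Continuous stdNormalPDF := by
  unfold stdNormalPDF; fun_prop

lemma bracket_pos {σ y₁ y₂ θ θ' : ℝ} (hσ : 0 < σ) (hy : y₁ < y₂) (hθ : θ' < θ) :
    stdNormalPDF ((y₁ - θ) / σ) * stdNormalPDF ((y₂ - θ') / σ) <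
      stdNormalPDF ((y₂ - θ) / σ) * stdNormalPDF ((y₁ - θ') / σ) := by
  unfold stdNormalPDF
  have hC : (0:ℝ) < (Real.sqrt (2 * Real.pi))⁻¹ := by positivity
  calc (Real.sqrt (2 * Real.pi))⁻¹ * Real.exp (-((y₁ - θ)/σ) ^ 2 / 2) *
        ((Real.sqrt (2 * Real.pi))⁻¹ * Real.exp (-((y₂ - θ')/σ) ^ 2 / 2))
      = (Real.sqrt (2 * Real.pi))⁻¹ * (Real.sqrt (2 * Real.pi))⁻¹ *
        Real.exp (-((y₁ - θ)/σ) ^ 2 / 2 + -((y₂ - θ')/σ) ^ 2 / 2) := by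
        rw [Real.exp_add]; ring
    _ < (Real.sqrt (2 * Real.pi))⁻¹ * (Real.sqrt (2 * Real.pi))⁻¹ *
        Real.exp (-((y₂ - θ)/σ) ^ 2 / 2 + -((y₁ - θ')/σ) ^ 2 / 2) := by
        apply mul_lt_mul_of_pos_left _ (by positivity)
        apply Real.exp_lt_exp.2
        have key : (-((y₂ - θ)/σ) ^ 2 / 2 + -((y₁ - θ')/σ) ^ 2 / 2) -
            (-((y₁ - θ)/σ) ^ 2 / 2 + -((y₂ - θ')/σ) ^ 2 / 2) = ((y₂ - y₁) * (θ - θ')) / σ ^ 2 := by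
          field_simp
          ring
        have hpos : 0 < ((y₂ - y₁) * (θ - θ')) / σ ^ 2 := by
          apply div_pos (mul_pos (by linarith) (by linarith)) (by positivity)
        linarith
    _ = (Real.sqrt (2 * Real.pi))⁻¹ * Real.exp (-((y₂ - θ)/σ) ^ 2 / 2) *
        ((Real.sqrt (2 * Real.pi))⁻¹ * Real.exp (-((y₁ - θ')/σ) ^ 2 / 2)) := by
        rw [Real.exp_add]; ring

lemma eq_dirac_of_compl_null (G : Measure ℝ) [IsProbabilityMeasure G] (x : ℝ)
    (h : G ({x}ᶜ) = 0) : G = Measure.dirac x := by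
  have hx : G {x} = 1 := by
    have := measure_add_measure_compl (μ := G) (s := {x}) (measurableSet_singleton x)
    rw [h, add_zero] at this
    simpa using this
  ext s hs
  rw [Measure.dirac_apply' x hs]
  by_cases hxs : x ∈ s
  · rw [indicator_of_mem hxs]
    have h2 : G {x} ≤ G s := measure_mono (singleton_subset_iff.2 hxs)
    rw [hx] at h2
    exact le_antisymm prob_le_one h2
  · rw [indicator_of_notMem hxs]
    have h2 : G s ≤ G ({x}ᶜ) := measure_mono (fun y hy => by
      simp only [mem_compl_iff, mem_singleton_iff]
      rintro rfl; exact hxs hy)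
    exact le_antisymm (h2.trans_eq h) (zero_le)

lemma offdiag_pos (G : Measure ℝ) [IsProbabilityMeasure G]
    (hG : ¬ ∃ θ₀ : ℝ, G = Measure.dirac θ₀) :
    0 < (G.prod G) {p : ℝ × ℝ | p.1 ≠ p.2} := by
  have hmeas : MeasurableSet {p : ℝ × ℝ | p.1 ≠ p.2} :=
    (isClosed_eq continuous_fst continuous_snd).measurableSet.compl
  rw [pos_iff_ne_zero]
  intro h0
  apply hG
  rw [Measure.prod_apply hmeas] at h0
  rw [lintegral_eq_zero_iff (measurable_measure_prodMk_left hmeas)] at h0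
  haveI : (ae G).NeBot := ae_neBot.2 (IsProbabilityMeasure.ne_zero G)
  obtain ⟨x, hx⟩ := h0.exists
  refine ⟨x, eq_dirac_of_compl_null G x ?_⟩
  have hpre : Prod.mk x ⁻¹' {p : ℝ × ℝ | p.1 ≠ p.2} = {x}ᶜ := by
    ext y; simp [eq_comm]
  rw [← hpre]
  simpa using hx

/-- **Strict monotonicity of the Bayes rule**: if `G` is not a Dirac point mass then `δ_G`
is strictly increasing; if `G` is the point mass at `θ₀` then `δ_G ≡ θ₀`. -/
theorem postMean_strictMono (σ c : ℝ) (hσ : 0 < σ) (hc : 0 < c)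
    (G : Measure ℝ) [IsProbabilityMeasure G] (hG : ∀ᵐ θ ∂G, θ ∈ Icc (-c) c) :
    ((¬ ∃ θ₀ : ℝ, G = Measure.dirac θ₀) → StrictMono (postMean σ G)) ∧
    (∀ θ₀ : ℝ, G = Measure.dirac θ₀ → ∀ y : ℝ, postMean σ G y = θ₀) := by
  set f : ℝ → ℝ → ℝ := fun y θ => stdNormalPDF ((y - θ) / σ) with hf
  have intf : ∀ y, Integrable (f y) G := by
    intro y
    apply Integrable.mono' (integrable_const ((Real.sqrt (2 * Real.pi))⁻¹))
    · exact (stdNormalPDF_cont.comp (by fun_prop)).aestronglyMeasurable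
    · filter_upwards with θ
      rw [Real.norm_eq_abs, abs_of_pos (stdNormalPDF_pos _)]
      exact stdNormalPDF_le _
  have intidf : ∀ y, Integrable (fun θ => θ * f y θ) G := by
    intro y
    apply Integrable.mono' (integrable_const (c * (Real.sqrt (2 * Real.pi))⁻¹))
    · exact (continuous_id.mul (stdNormalPDF_cont.comp (by fun_prop))).aestronglyMeasurable
    · filter_upwards [hG] with θ hθ
      rw [Real.norm_eq_abs, abs_mul, abs_of_pos (stdNormalPDF_pos _)]
      exact mul_le_mul (abs_le.2 ⟨hθ.1, hθ.2⟩) (stdNormalPDF_le _)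
        (stdNormalPDF_pos _).le hc.le
  have Bpos : ∀ y, 0 < ∫ θ, f y θ ∂G := by
    intro y
    rw [integral_pos_iff_support_of_nonneg (fun θ => (stdNormalPDF_pos _).le) (intf y)]
    have hs : Function.support (f y) = univ := eq_univ_of_forall fun θ => (stdNormalPDF_pos _).ne'
    rw [hs, measure_univ]
    exact one_pos
  constructor
  · intro hnd y₁ y₂ hy
    set h : ℝ × ℝ → ℝ :=
      fun p => (p.1 - p.2) * (f y₂ p.1 * f y₁ p.2 - f y₁ p.1 * f y₂ p.2) with hh
    have hdiag : ∀ p : ℝ × ℝ, p.1 = p.2 → h p = 0 := by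
      intro p hp; simp [hh, hp]
    have hposoff : ∀ p : ℝ × ℝ, p.1 ≠ p.2 → 0 < h p := by
      intro p hp
      rcases lt_or_gt_of_ne hp with hlt | hgt
      · have hb := bracket_pos hσ hy hlt
        have h1 : f y₂ p.1 * f y₁ p.2 - f y₁ p.1 * f y₂ p.2 < 0 := by
          simp only [hf]; nlinarith [hb]
        exact mul_pos_of_neg_of_neg (by linarith) h1
      · have hb := bracket_pos hσ hy hgt
        have h1 : 0 < f y₂ p.1 * f y₁ p.2 - f y₁ p.1 * f y₂ p.2 := by
          simp only [hf]; nlinarith [hb]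
        exact mul_pos (by linarith) h1
    have hnn : ∀ p : ℝ × ℝ, 0 ≤ h p := by
      intro p
      by_cases hp : p.1 = p.2
      · exact (hdiag p hp).ge
      · exact (hposoff p hp).le
    have hfun : h = fun p : ℝ × ℝ =>
        (p.1 * f y₂ p.1) * f y₁ p.2 - (p.1 * f y₁ p.1) * f y₂ p.2
          - f y₂ p.1 * (p.2 * f y₁ p.2) + f y₁ p.1 * (p.2 * f y₂ p.2) := by
      funext p; simp only [hh]; ring
    have i1 : Integrable (fun p : ℝ × ℝ => (p.1 * f y₂ p.1) * f y₁ p.2) (G.prod G) :=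
      (intidf y₂).mul_prod (intf y₁)
    have i2 : Integrable (fun p : ℝ × ℝ => (p.1 * f y₁ p.1) * f y₂ p.2) (G.prod G) :=
      (intidf y₁).mul_prod (intf y₂)
    have i3 : Integrable (fun p : ℝ × ℝ => f y₂ p.1 * (p.2 * f y₁ p.2)) (G.prod G) :=
      (intf y₂).mul_prod (intidf y₁)
    have i4 : Integrable (fun p : ℝ × ℝ => f y₁ p.1 * (p.2 * f y₂ p.2)) (G.prod G) :=
      (intf y₁).mul_prod (intidf y₂)
    have hint : Integrable h (G.prod G) := by
      rw [hfun]; exact ((i1.sub i2).sub i3).add i4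
    have hIpos : 0 < ∫ p, h p ∂(G.prod G) := by
      rw [integral_pos_iff_support_of_nonneg hnn hint]
      have hsupp : Function.support h = {p : ℝ × ℝ | p.1 ≠ p.2} := by
        ext p
        constructor
        · intro hp hpe; exact hp (hdiag p hpe)
        · intro hp; exact (hposoff p hp).ne'
      rw [hsupp]
      exact offdiag_pos G hnd
    have i12 : Integrable (fun p : ℝ × ℝ =>
        (p.1 * f y₂ p.1) * f y₁ p.2 - (p.1 * f y₁ p.1) * f y₂ p.2) (G.prod G) := i1.sub i2
    have i123 : Integrable (fun p : ℝ × ℝ =>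
        (p.1 * f y₂ p.1) * f y₁ p.2 - (p.1 * f y₁ p.1) * f y₂ p.2
          - f y₂ p.1 * (p.2 * f y₁ p.2)) (G.prod G) := i12.sub i3
    have hsplit : ∫ p, h p ∂(G.prod G) =
        (∫ θ, θ * f y₂ θ ∂G) * (∫ θ, f y₁ θ ∂G) - (∫ θ, θ * f y₁ θ ∂G) * (∫ θ, f y₂ θ ∂G)
          - (∫ θ, f y₂ θ ∂G) * (∫ θ, θ * f y₁ θ ∂G)
          + (∫ θ, f y₁ θ ∂G) * (∫ θ, θ * f y₂ θ ∂G) := by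
      calc ∫ p, h p ∂(G.prod G)
          = ∫ p : ℝ × ℝ, ((p.1 * f y₂ p.1) * f y₁ p.2 - (p.1 * f y₁ p.1) * f y₂ p.2
              - f y₂ p.1 * (p.2 * f y₁ p.2) + f y₁ p.1 * (p.2 * f y₂ p.2)) ∂(G.prod G) := by
            rw [hfun]
        _ = (∫ p : ℝ × ℝ, ((p.1 * f y₂ p.1) * f y₁ p.2 - (p.1 * f y₁ p.1) * f y₂ p.2
              - f y₂ p.1 * (p.2 * f y₁ p.2)) ∂(G.prod G))
              + ∫ p : ℝ × ℝ, f y₁ p.1 * (p.2 * f y₂ p.2) ∂(G.prod G) := integral_add i123 i4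
        _ = (∫ p : ℝ × ℝ, ((p.1 * f y₂ p.1) * f y₁ p.2 - (p.1 * f y₁ p.1) * f y₂ p.2) ∂(G.prod G))
              - (∫ p : ℝ × ℝ, f y₂ p.1 * (p.2 * f y₁ p.2) ∂(G.prod G))
              + ∫ p : ℝ × ℝ, f y₁ p.1 * (p.2 * f y₂ p.2) ∂(G.prod G) := by
            rw [integral_sub i12 i3]
        _ = (∫ p : ℝ × ℝ, (p.1 * f y₂ p.1) * f y₁ p.2 ∂(G.prod G))
              - (∫ p : ℝ × ℝ, (p.1 * f y₁ p.1) * f y₂ p.2 ∂(G.prod G))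
              - (∫ p : ℝ × ℝ, f y₂ p.1 * (p.2 * f y₁ p.2) ∂(G.prod G))
              + ∫ p : ℝ × ℝ, f y₁ p.1 * (p.2 * f y₂ p.2) ∂(G.prod G) := by
            rw [integral_sub i1 i2]
        _ = (∫ θ, θ * f y₂ θ ∂G) * (∫ θ, f y₁ θ ∂G) - (∫ θ, θ * f y₁ θ ∂G) * (∫ θ, f y₂ θ ∂G)
              - (∫ θ, f y₂ θ ∂G) * (∫ θ, θ * f y₁ θ ∂G)
              + (∫ θ, f y₁ θ ∂G) * (∫ θ, θ * f y₂ θ ∂G) := by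
            rw [integral_prod_mul (fun θ => θ * f y₂ θ) (f y₁),
              integral_prod_mul (fun θ => θ * f y₁ θ) (f y₂),
              integral_prod_mul (f y₂) (fun θ => θ * f y₁ θ),
              integral_prod_mul (f y₁) (fun θ => θ * f y₂ θ)]
    unfold postMean
    rw [div_lt_div_iff₀ (Bpos y₁) (Bpos y₂)]
    have := hIpos
    rw [hsplit] at this
    nlinarith [this]
  · intro θ₀ hd y
    subst hd
    unfold postMean
    rw [integral_dirac, integral_dirac, mul_div_assoc, div_self (stdNormalPDF_pos _).ne',
      mul_one]
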